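/- Operator-norm bound on the twirled swap: Let T : L(H_A) → L(H_B) be a linear map sending Hermitian matrices to Hermitian matrices, with Choi–Jamiołkowski representation ω = (T⊗id)(Φ_{AA'}), and let T† : L(H_B) → L(H_A) denote its adjoint with respect to the Hilbert–Schmidt inner product ⟨X,Y⟩ = Tr(X†Y). Then ‖(T†⊗T†)(F_B)‖_∞ ≤ d_A² · Tr(ω²), where F_B is the swap operator on H_B⊗H_B and ‖·‖_∞ is the operator norm. -/

import Mathlib

open scoped Kronecker
open MeasureTheory Matrix
open scoped ComplexOrder

noncomputable section

namespace Decoupling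

/-- We equip the unitary group with its Borel σ-algebra. -/
instance (n : Type*) [Fintype n] [DecidableEq n] :
    MeasurableSpace (Matrix.unitaryGroup n ℂ) := borel _

instance (n : Type*) [Fintype n] [DecidableEq n] :
    BorelSpace (Matrix.unitaryGroup n ℂ) := ⟨rfl⟩

/-- The trace norm (Schatten 1-norm) `‖X‖₁ = Tr √(XᴴX)` of a complex matrix. -/
def trNorm {n : Type*} [Fintype n] [DecidableEq n] (X : Matrix n n ℂ) : ℝ :=
  (((Matrix.posSemidef_conjTranspose_mul_self X).1.eigenvectorUnitary.1 *
    diagonal ((fun r : ℝ => (r : ℂ)) ∘ (√·) ∘ (Matrix.posSemidef_conjTranspose_mul_self X).1.eigenvalues) *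
    (star (Matrix.posSemidef_conjTranspose_mul_self X).1.eigenvectorUnitary : Matrix n n ℂ)).trace).re

/-- The Hilbert–Schmidt norm (Schatten 2-norm) `‖X‖₂ = √(Tr (XᴴX))`. -/
def hsNorm {n : Type*} [Fintype n] (X : Matrix n n ℂ) : ℝ :=
  Real.sqrt ((Xᴴ * X).trace.re)

/-- Partial trace over the first tensor factor. -/
def ptrFst {a r : Type*} [Fintype a] (ρ : Matrix (a × r) (a × r) ℂ) : Matrix r r ℂ :=
  Matrix.of fun i j => ∑ k, ρ (k, i) (k, j)

/-- Partial trace over the second tensor factor. -/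
def ptrSnd {a r : Type*} [Fintype r] (ρ : Matrix (a × r) (a × r) ℂ) : Matrix a a ℂ :=
  Matrix.of fun i j => ∑ k, ρ (i, k) (j, k)

/-- The maximally entangled state `Φ_{AA'}` on `H_A ⊗ H_{A'}`. -/
def maxEnt (a : Type*) [Fintype a] [DecidableEq a] : Matrix (a × a) (a × a) ℂ :=
  Matrix.of fun p q => if p.1 = p.2 ∧ q.1 = q.2 then (Fintype.card a : ℂ)⁻¹ else 0

/-- The tensor product `T ⊗ E` of two superoperators (given on basis matrices, which
for linear `T`, `E` agrees with the usual tensor product of linear maps). -/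
def tensorHom {a a' b r : Type*} [Fintype a] [Fintype a'] [DecidableEq a] [DecidableEq a']
    (T : Matrix a a ℂ → Matrix b b ℂ) (E : Matrix a' a' ℂ → Matrix r r ℂ)
    (M : Matrix (a × a') (a × a') ℂ) : Matrix (b × r) (b × r) ℂ :=
  Matrix.of fun p q => ∑ i, ∑ j, ∑ k, ∑ l,
    M (i, k) (j, l) * T (Matrix.single i j 1) p.1 q.1
      * E (Matrix.single k l 1) p.2 q.2

/-- The Choi–Jamiołkowski representation `ω = (T ⊗ id)(Φ_{AA'})`, with the output (`B`)
factor first and the copy `A'` second. -/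
def choi {a b : Type*} [Fintype a] [DecidableEq a]
    (T : Matrix a a ℂ → Matrix b b ℂ) : Matrix (b × a) (b × a) ℂ :=
  tensorHom T id (maxEnt a)

/-- Reindexing that exchanges the two tensor factors. -/
def swapIdx {a b : Type*} (M : Matrix (a × b) (a × b) ℂ) : Matrix (b × a) (b × a) ℂ :=
  M.submatrix Prod.swap Prod.swap

/-- The conditional min-entropy `Hmin(A|B)_ρ` of a bipartite operator (conditioning on the
second tensor factor). -/
def Hmin {a b : Type*} [Fintype a] [DecidableEq a] [Fintype b]
    (ρ : Matrix (a × b) (a × b) ℂ) : ℝ :=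
  sSup {x : ℝ | ∃ σ : Matrix b b ℂ, σ.PosSemidef ∧ σ.trace = 1 ∧
    ((2 : ℝ) ^ (-x) • ((1 : Matrix a a ℂ) ⊗ₖ σ) - ρ).PosSemidef}

/-- A subnormalized density operator. -/
def IsSubDensity {n : Type*} [Fintype n] (ρ : Matrix n n ℂ) : Prop :=
  ρ.PosSemidef ∧ ρ.trace.re ≤ 1

/-- Conjugation `(U ⊗ 1_R) ρ (U ⊗ 1_R)ᴴ` on the first factor. -/
def conjA {a r : Type*} [Fintype a] [Fintype r] [DecidableEq r]
    (U : Matrix a a ℂ) (ρ : Matrix (a × r) (a × r) ℂ) : Matrix (a × r) (a × r) ℂ :=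
  (U ⊗ₖ (1 : Matrix r r ℂ)) * ρ * (U ⊗ₖ (1 : Matrix r r ℂ))ᴴ

/-- Two-fold conjugation `U^{⊗2} M (U^{⊗2})ᴴ`. -/
def conj2 {a : Type*} [Fintype a] (U : Matrix a a ℂ) (M : Matrix (a × a) (a × a) ℂ) :
    Matrix (a × a) (a × a) ℂ :=
  (U ⊗ₖ U) * M * (U ⊗ₖ U)ᴴ

/-- The Haar two-fold twirl `G_H(M) = ∫ U^{⊗2} M (U†)^{⊗2} dU` (entrywise integral). -/
def twirlHaar {a : Type*} [Fintype a] [DecidableEq a]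
    (μ : Measure (Matrix.unitaryGroup a ℂ)) (M : Matrix (a × a) (a × a) ℂ) :
    Matrix (a × a) (a × a) ℂ :=
  Matrix.of fun p q => ∫ U : Matrix.unitaryGroup a ℂ, conj2 (U : Matrix a a ℂ) M p q ∂μ

/-- The two-fold twirl `G_W(M) = ∑ i, p i • U_i^{⊗2} M (U_i†)^{⊗2}` of a finite family. -/
def twirlMix {ι a : Type*} [Fintype ι] [Fintype a] [DecidableEq a]
    (p : ι → ℝ) (V : ι → Matrix.unitaryGroup a ℂ) (M : Matrix (a × a) (a × a) ℂ) :
    Matrix (a × a) (a × a) ℂ :=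
  ∑ i, p i • conj2 (V i : Matrix a a ℂ) M

/-- `‖S‖⋄ ≤ δ`: the trace norm of `(S ⊗ id_R)(X)` is at most `δ ‖X‖₁` for every ancilla `R`
and every `X`. -/
def DiamondLE {c : Type*} [Fintype c] [DecidableEq c]
    (S : Matrix c c ℂ → Matrix c c ℂ) (δ : ℝ) : Prop :=
  ∀ (m : ℕ) (X : Matrix (c × Fin m) (c × Fin m) ℂ),
    trNorm (tensorHom S id X) ≤ δ * trNorm X

/-- `{(p i, V i)}` is a `δ`-approximate unitary two-design (w.r.t. the Haar probability
measure `μ`). -/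
def IsApproxTwoDesign {ι a : Type*} [Fintype ι] [Fintype a] [DecidableEq a]
    (μ : Measure (Matrix.unitaryGroup a ℂ))
    (p : ι → ℝ) (V : ι → Matrix.unitaryGroup a ℂ) (δ : ℝ) : Prop :=
  (∀ i, 0 ≤ p i) ∧ (∑ i, p i = 1) ∧
    DiamondLE (fun M => twirlMix p V M - twirlHaar μ M) δ

end Decoupling

namespace Decoupling

/-- The swap operator `F = ∑_{i,j} |i⟩⟨j| ⊗ |j⟩⟨i|` on `H ⊗ H`. -/
def swapOp (b : Type*) [DecidableEq b] : Matrix (b × b) (b × b) ℂ :=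
  Matrix.of fun p q => if p.1 = q.2 ∧ p.2 = q.1 then 1 else 0

/-- The operator norm (Schatten ∞-norm) of a complex matrix. -/
def opNorm {n : Type*} [Fintype n] [DecidableEq n] (X : Matrix n n ℂ) : ℝ :=
  ‖Matrix.toEuclideanCLM (𝕜 := ℂ) X‖


open Finset in
private lemma quad_bound' {α : Type*} [Fintype α] (A : α → α → ℝ) (hA : ∀ i j, 0 ≤ A i j)
    (v w : α × α → ℝ) (hv : ∀ p, 0 ≤ v p) :
    ∑ p : α × α, ∑ q : α × α, v p * w q * (A p.1 q.1 * A p.2 q.2)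
      ≤ (∑ i : α, ∑ j : α, A i j ^ 2) *
        (Real.sqrt (∑ p : α × α, v p ^ 2) * Real.sqrt (∑ q : α × α, w q ^ 2)) := by
  set C : ℝ := ∑ i : α, ∑ j : α, A i j ^ 2 with hC
  set B : α → ℝ := fun n => Real.sqrt (∑ m, A n m ^ 2) with hB
  set W : α → ℝ := fun m => Real.sqrt (∑ m', w (m, m') ^ 2) with hW
  have hBnn : ∀ n, 0 ≤ B n := fun n => Real.sqrt_nonneg _
  have hCnn : 0 ≤ C := Finset.sum_nonneg fun i _ => Finset.sum_nonneg fun j _ => sq_nonneg _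
  have hBsq : ∀ n, B n ^ 2 = ∑ m, A n m ^ 2 := fun n =>
    Real.sq_sqrt (Finset.sum_nonneg fun m _ => sq_nonneg _)
  have hWsq : ∀ m, W m ^ 2 = ∑ m', w (m, m') ^ 2 := fun m =>
    Real.sq_sqrt (Finset.sum_nonneg fun m' _ => sq_nonneg _)
  have hnw : Real.sqrt (∑ m, W m ^ 2) = Real.sqrt (∑ q : α × α, w q ^ 2) := by
    rw [Fintype.sum_prod_type]
    exact congrArg _ (Finset.sum_congr rfl fun m _ => hWsq m)
  have hBsum : ∑ n, B n ^ 2 = C := by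
    rw [hC]; exact Finset.sum_congr rfl fun n _ => hBsq n
  calc ∑ p : α × α, ∑ q : α × α, v p * w q * (A p.1 q.1 * A p.2 q.2)
      = ∑ p : α × α, ∑ m, (v p * A p.1 m) * ∑ m', w (m, m') * A p.2 m' := by
        refine Finset.sum_congr rfl fun p _ => ?_
        rw [Fintype.sum_prod_type]
        refine Finset.sum_congr rfl fun m _ => ?_
        rw [Finset.mul_sum]
        exact Finset.sum_congr rfl fun m' _ => by ring
    _ ≤ ∑ p : α × α, ∑ m, (v p * A p.1 m) * (W m * B p.2) := by
        refine Finset.sum_le_sum fun p _ => Finset.sum_le_sum fun m _ => ?_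
        refine mul_le_mul_of_nonneg_left ?_ (mul_nonneg (hv p) (hA _ _))
        exact Real.sum_mul_le_sqrt_mul_sqrt _ _ _
    _ = ∑ p : α × α, (v p * B p.2) * ∑ m, A p.1 m * W m := by
        refine Finset.sum_congr rfl fun p _ => ?_
        rw [Finset.mul_sum]
        exact Finset.sum_congr rfl fun m _ => by ring
    _ ≤ ∑ p : α × α, (v p * B p.2) * (B p.1 * Real.sqrt (∑ q : α × α, w q ^ 2)) := by
        refine Finset.sum_le_sum fun p _ => ?_
        refine mul_le_mul_of_nonneg_left ?_ (mul_nonneg (hv p) (hBnn _))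
        calc ∑ m, A p.1 m * W m
            ≤ Real.sqrt (∑ m, A p.1 m ^ 2) * Real.sqrt (∑ m, W m ^ 2) :=
              Real.sum_mul_le_sqrt_mul_sqrt _ _ _
          _ = B p.1 * Real.sqrt (∑ q : α × α, w q ^ 2) := by rw [hnw]
    _ = (∑ p : α × α, v p * (B p.1 * B p.2)) * Real.sqrt (∑ q : α × α, w q ^ 2) := by
        rw [Finset.sum_mul]
        exact Finset.sum_congr rfl fun p _ => by ring
    _ ≤ (Real.sqrt (∑ p : α × α, v p ^ 2) *
          Real.sqrt (∑ p : α × α, (B p.1 * B p.2) ^ 2)) *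
          Real.sqrt (∑ q : α × α, w q ^ 2) := by
        refine mul_le_mul_of_nonneg_right ?_ (Real.sqrt_nonneg _)
        exact Real.sum_mul_le_sqrt_mul_sqrt _ _ _
    _ = C * (Real.sqrt (∑ p : α × α, v p ^ 2) * Real.sqrt (∑ q : α × α, w q ^ 2)) := by
        have h1 : ∑ p : α × α, (B p.1 * B p.2) ^ 2 = C * C := by
          rw [Fintype.sum_prod_type, ← hBsum]
          rw [Finset.sum_mul_sum]
          exact Finset.sum_congr rfl fun n _ => Finset.sum_congr rfl fun n' _ => by ring
        rw [h1, Real.sqrt_mul_self hCnn]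
        ring

open Finset in
private lemma opNorm_le_of_bilinear {α : Type*} [Fintype α] [DecidableEq α]
    (K : Matrix α α ℂ) (C : ℝ) (hC : 0 ≤ C)
    (h : ∀ u w : α → ℂ, ‖∑ p, (starRingEnd ℂ) (u p) * (K *ᵥ w) p‖ ≤
      C * (Real.sqrt (∑ p, ‖u p‖ ^ 2) * Real.sqrt (∑ q, ‖w q‖ ^ 2))) :
    opNorm K ≤ C := by
  refine ContinuousLinearMap.opNorm_le_bound _ hC fun x => ?_
  set w : α → ℂ := fun p => x p with hw
  set u : α → ℂ := K *ᵥ w with hu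
  have hx : ‖x‖ = Real.sqrt (∑ q, ‖w q‖ ^ 2) := by
    rw [EuclideanSpace.norm_eq]
  have happ : ∀ p, (Matrix.toEuclideanCLM (𝕜 := ℂ) K x) p = u p := by
    intro p; rfl
  have hnKx : ‖Matrix.toEuclideanCLM (𝕜 := ℂ) K x‖ = Real.sqrt (∑ p, ‖u p‖ ^ 2) := by
    rw [EuclideanSpace.norm_eq]
    exact congrArg _ (Finset.sum_congr rfl fun p _ => by rw [happ p])
  set N : ℝ := Real.sqrt (∑ p, ‖u p‖ ^ 2) with hN
  have hNnn : 0 ≤ N := Real.sqrt_nonneg _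
  have hNsq : N ^ 2 = ∑ p, ‖u p‖ ^ 2 :=
    Real.sq_sqrt (Finset.sum_nonneg fun p _ => sq_nonneg _)
  have hsum : ∑ p, (starRingEnd ℂ) (u p) * u p = ((∑ p, ‖u p‖ ^ 2 : ℝ) : ℂ) := by
    push_cast
    refine Finset.sum_congr rfl fun p _ => ?_
    rw [mul_comm, Complex.mul_conj']
  have hkey : N ^ 2 ≤ C * (N * Real.sqrt (∑ q, ‖w q‖ ^ 2)) := by
    have := h u w
    rw [← hu, hsum] at this
    rw [hNsq]
    calc ∑ p, ‖u p‖ ^ 2 = ‖((∑ p, ‖u p‖ ^ 2 : ℝ) : ℂ)‖ := by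
          rw [Complex.norm_real, Real.norm_of_nonneg (Finset.sum_nonneg fun p _ => sq_nonneg _)]
      _ ≤ C * (N * Real.sqrt (∑ q, ‖w q‖ ^ 2)) := this
  rw [hnKx, hx]
  rcases eq_or_lt_of_le hNnn with h0 | h0
  · rw [← h0]; exact mul_nonneg hC (Real.sqrt_nonneg _)
  · have hs : N * N ≤ (C * Real.sqrt (∑ q, ‖w q‖ ^ 2)) * N := by
      calc N * N = N ^ 2 := (sq N).symm
        _ ≤ C * (N * Real.sqrt (∑ q, ‖w q‖ ^ 2)) := hkey
        _ = (C * Real.sqrt (∑ q, ‖w q‖ ^ 2)) * N := by ring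
    exact le_of_mul_le_mul_right hs h0

open Finset in
private lemma map_conjT {a b : Type*} [Fintype a] [DecidableEq a] [Fintype b] [DecidableEq b]
    (T : Matrix a a ℂ →ₗ[ℂ] Matrix b b ℂ)
    (hT : ∀ M : Matrix a a ℂ, M.IsHermitian → (T M).IsHermitian)
    (X : Matrix a a ℂ) : T Xᴴ = (T X)ᴴ := by
  have hHh : ((1/2 : ℂ) • (X + Xᴴ)).IsHermitian := by
    show _ᴴ = _
    ext i j
    simp only [Matrix.conjTranspose_apply, Matrix.smul_apply, Matrix.add_apply, smul_eq_mul,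
      star_mul', star_add, star_star]
    rw [show star (1/2 : ℂ) = 1/2 by norm_num [Complex.ext_iff]]
    ring
  have hGh : ((Complex.I/2 : ℂ) • (Xᴴ - X)).IsHermitian := by
    show _ᴴ = _
    ext i j
    simp only [Matrix.conjTranspose_apply, Matrix.smul_apply, Matrix.sub_apply, smul_eq_mul,
      star_mul', star_sub, star_star]
    rw [show star (Complex.I/2 : ℂ) = -(Complex.I/2) by norm_num [Complex.ext_iff]]
    ring
  have e1 : T Xᴴ = T ((1/2:ℂ) • (X + Xᴴ)) - Complex.I • T ((Complex.I/2 : ℂ) • (Xᴴ - X)) := by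
    rw [← T.map_smul, ← map_sub]
    congr 1
    ext i j
    simp only [Matrix.sub_apply, Matrix.add_apply, Matrix.smul_apply, Matrix.conjTranspose_apply,
      smul_eq_mul]
    linear_combination ((star (X j i) - X i j)/2) * Complex.I_sq
  have e2 : T X = T ((1/2:ℂ) • (X + Xᴴ)) + Complex.I • T ((Complex.I/2 : ℂ) • (Xᴴ - X)) := by
    rw [← T.map_smul, ← map_add]
    congr 1
    ext i j
    simp only [Matrix.add_apply, Matrix.smul_apply, Matrix.sub_apply, Matrix.conjTranspose_apply,
      smul_eq_mul]
    linear_combination (-((star (X j i)) - X i j)/2) * Complex.I_sq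
  rw [e1, e2, Matrix.conjTranspose_add, Matrix.conjTranspose_smul, hT _ hHh, hT _ hGh,
    Complex.star_def, Complex.conj_I, neg_smul, ← sub_eq_add_neg]

/-- **Operator-norm bound on the twirled swap**:
`‖(T† ⊗ T†)(F_B)‖_∞ ≤ d_A² Tr(ω²)` where `T†` is the Hilbert–Schmidt adjoint of the
Hermiticity-preserving map `T` and `ω` is its Choi–Jamiołkowski representation. -/
theorem twirled_swap_opNorm_bound {a b : Type*} [Fintype a] [DecidableEq a]
    [Fintype b] [DecidableEq b]
    (T : Matrix a a ℂ →ₗ[ℂ] Matrix b b ℂ)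
    (hT : ∀ M : Matrix a a ℂ, M.IsHermitian → (T M).IsHermitian)
    (Tad : Matrix b b ℂ →ₗ[ℂ] Matrix a a ℂ)
    (hadj : ∀ (X : Matrix b b ℂ) (Y : Matrix a a ℂ),
      ((Tad X)ᴴ * Y).trace = (Xᴴ * T Y).trace) :
    opNorm (tensorHom (⇑Tad) (⇑Tad) (swapOp b)) ≤
      (Fintype.card a : ℝ) ^ 2 * ((choi ⇑T * choi ⇑T).trace).re := by
  classical
  set g : a → a → ℝ :=
    fun m n => ∑ x : b × b, ‖T (Matrix.single m n 1) x.1 x.2‖ ^ 2 with hg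
  set A : a → a → ℝ := fun m n => Real.sqrt (g m n) with hAdef
  set C : ℝ := ∑ m : a, ∑ n : a, g m n with hCdef
  have hgnn : ∀ m n, 0 ≤ g m n := fun m n =>
    Finset.sum_nonneg fun x _ => sq_nonneg _
  have hAnn : ∀ m n, 0 ≤ A m n := fun m n => Real.sqrt_nonneg _
  have hAsq : ∀ m n, A m n ^ 2 = g m n := fun m n => Real.sq_sqrt (hgnn m n)
  have hCnn : 0 ≤ C := Finset.sum_nonneg fun m _ => Finset.sum_nonneg fun n _ => hgnn m n
  have hconj : ∀ X : Matrix a a ℂ, T Xᴴ = (T X)ᴴ := map_conjT T hT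
  have hstdH : ∀ i j : a, (Matrix.single i j (1:ℂ))ᴴ = Matrix.single j i 1 := by
    intro i j
    ext x y
    simp [Matrix.single, Matrix.conjTranspose_apply, and_comm, apply_ite (star : ℂ → ℂ)]
  have hswap : ∀ (i j : a) (x y : b),
      T (Matrix.single j i 1) y x = star (T (Matrix.single i j 1) x y) := by
    intro i j x y
    rw [← hstdH i j, hconj, Matrix.conjTranspose_apply]
  -- entries of the adjoint
  have htad : ∀ (X : Matrix b b ℂ) (m n : a),
      Tad X m n = ∑ i : b, ∑ j : b, X i j * star (T (Matrix.single m n 1) i j) := by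
    intro X m n
    have h1 := hadj X (Matrix.single m n 1)
    have hl : ((Tad X)ᴴ * Matrix.single m n 1).trace = star (Tad X m n) := by
      simp [Matrix.trace, Matrix.diag, Matrix.mul_apply, Matrix.single,
        Matrix.conjTranspose_apply, Matrix.of_apply, ite_and, mul_ite, mul_one, mul_zero]
    have hr : (Xᴴ * T (Matrix.single m n 1)).trace
        = ∑ j : b, ∑ i : b, star (X i j) * T (Matrix.single m n 1) i j := by
      simp [Matrix.trace, Matrix.diag, Matrix.mul_apply, Matrix.conjTranspose_apply]
    rw [hl, hr] at h1
    have h2 := congrArg star h1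
    rw [star_star] at h2
    rw [h2, star_sum]
    rw [Finset.sum_comm]
    refine Finset.sum_congr rfl fun i _ => ?_
    rw [star_sum]
    refine Finset.sum_congr rfl fun j _ => ?_
    rw [star_mul', star_star]
  have hTadE : ∀ (i k : b) (m n : a),
      Tad (Matrix.single i k 1) m n
        = star (T (Matrix.single m n 1) i k) := by
    intro i k m n
    rw [htad]
    simp [Matrix.single, Matrix.of_apply, ite_and, ite_mul, one_mul, zero_mul]
  -- entries of the twirled swap
  have hK : ∀ p q : a × a,
      tensorHom (⇑Tad) (⇑Tad) (swapOp b) p q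
        = ∑ x : b × b, star (T (Matrix.single p.1 q.1 1) x.1 x.2)
            * star (T (Matrix.single p.2 q.2 1) x.2 x.1) := by
    intro p q
    rw [Fintype.sum_prod_type]
    unfold tensorHom swapOp
    simp only [Matrix.of_apply, ite_and, ite_mul, one_mul, zero_mul, mul_ite, mul_zero, mul_one,
      Finset.sum_ite_eq, Finset.sum_ite_eq', Finset.mem_univ, if_true, hTadE]
  have hKb : ∀ p q : a × a,
      ‖tensorHom (⇑Tad) (⇑Tad) (swapOp b) p q‖ ≤ A p.1 q.1 * A p.2 q.2 := by
    intro p q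
    rw [hK p q]
    calc ‖∑ x : b × b, star (T (Matrix.single p.1 q.1 1) x.1 x.2)
            * star (T (Matrix.single p.2 q.2 1) x.2 x.1)‖
        ≤ ∑ x : b × b, ‖T (Matrix.single p.1 q.1 1) x.1 x.2‖
            * ‖T (Matrix.single p.2 q.2 1) x.2 x.1‖ := by
          refine (norm_sum_le _ _).trans (Finset.sum_le_sum fun x _ => le_of_eq ?_)
          rw [norm_mul, norm_star, norm_star]
      _ ≤ Real.sqrt (∑ x : b × b, ‖T (Matrix.single p.1 q.1 1) x.1 x.2‖ ^ 2)
            * Real.sqrt (∑ x : b × b, ‖T (Matrix.single p.2 q.2 1) x.2 x.1‖ ^ 2) :=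
          Real.sum_mul_le_sqrt_mul_sqrt _ _ _
      _ = A p.1 q.1 * A p.2 q.2 := by
          have h2 : ∑ x : b × b, ‖T (Matrix.single p.2 q.2 1) x.2 x.1‖ ^ 2
              = g p.2 q.2 := by
            rw [hg]
            exact Fintype.sum_equiv (Equiv.prodComm b b) _ _ (fun x => rfl)
          rw [h2, hAdef, hg]
  -- the bilinear bound
  have hbil : ∀ u w : (a × a) → ℂ,
      ‖∑ p, (starRingEnd ℂ) (u p) * ((tensorHom (⇑Tad) (⇑Tad) (swapOp b)) *ᵥ w) p‖ ≤
        C * (Real.sqrt (∑ p, ‖u p‖ ^ 2) * Real.sqrt (∑ q, ‖w q‖ ^ 2)) := by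
    intro u w
    calc ‖∑ p, (starRingEnd ℂ) (u p) * ((tensorHom (⇑Tad) (⇑Tad) (swapOp b)) *ᵥ w) p‖
        = ‖∑ p, ∑ q, (starRingEnd ℂ) (u p)
            * (tensorHom (⇑Tad) (⇑Tad) (swapOp b) p q * w q)‖ := by
          congr 1
          refine Finset.sum_congr rfl fun p _ => ?_
          rw [Matrix.mulVec, dotProduct, Finset.mul_sum]
      _ ≤ ∑ p, ∑ q, ‖u p‖ * ‖w q‖ * ‖tensorHom (⇑Tad) (⇑Tad) (swapOp b) p q‖ := by
          refine (norm_sum_le _ _).trans (Finset.sum_le_sum fun p _ =>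
            (norm_sum_le _ _).trans (Finset.sum_le_sum fun q _ => le_of_eq ?_))
          rw [norm_mul, norm_mul, RingHomIsometric.norm_map]
          ring
      _ ≤ ∑ p, ∑ q, ‖u p‖ * ‖w q‖ * (A p.1 q.1 * A p.2 q.2) := by
          refine Finset.sum_le_sum fun p _ => Finset.sum_le_sum fun q _ => ?_
          exact mul_le_mul_of_nonneg_left (hKb p q)
            (mul_nonneg (norm_nonneg _) (norm_nonneg _))
      _ ≤ (∑ m : a, ∑ n : a, A m n ^ 2) *
            (Real.sqrt (∑ p, ‖u p‖ ^ 2) * Real.sqrt (∑ q, ‖w q‖ ^ 2)) :=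
          quad_bound' A hAnn (fun p => ‖u p‖) (fun q => ‖w q‖) (fun p => norm_nonneg _)
      _ = C * (Real.sqrt (∑ p, ‖u p‖ ^ 2) * Real.sqrt (∑ q, ‖w q‖ ^ 2)) := by
          rw [hCdef]
          congr 1
          exact Finset.sum_congr rfl fun m _ => Finset.sum_congr rfl fun n _ => hAsq m n
  -- entries of the Choi matrix
  have hchoi : ∀ p q : b × a,
      choi (⇑T) p q = (Fintype.card a : ℂ)⁻¹ * T (Matrix.single p.2 q.2 1) p.1 q.1 := by
    rintro ⟨x, i⟩ ⟨y, j⟩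
    unfold choi tensorHom maxEnt
    simp only [Matrix.of_apply, id_eq]
    simp [Matrix.single, Matrix.of_apply, ite_and, mul_ite, mul_one, mul_zero]
  -- the trace identity
  have htr : ((choi (⇑T) * choi (⇑T)).trace).re
      = (Fintype.card a : ℝ)⁻¹ * (Fintype.card a : ℝ)⁻¹ * C := by
    have h0 : (choi (⇑T) * choi (⇑T)).trace
        = (((Fintype.card a : ℝ)⁻¹ * (Fintype.card a : ℝ)⁻¹ * C : ℝ) : ℂ) := by
      calc (choi (⇑T) * choi (⇑T)).trace
          = ∑ p : b × a, ∑ q : b × a, choi (⇑T) p q * choi (⇑T) q p := by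
            simp [Matrix.trace, Matrix.diag, Matrix.mul_apply]
        _ = ∑ p : b × a, ∑ q : b × a, ((Fintype.card a : ℂ)⁻¹ * (Fintype.card a : ℂ)⁻¹)
              * ((‖T (Matrix.single p.2 q.2 1) p.1 q.1‖ ^ 2 : ℝ) : ℂ) := by
            refine Finset.sum_congr rfl fun p _ => Finset.sum_congr rfl fun q _ => ?_
            rw [hchoi p q, hchoi q p, hswap p.2 q.2 p.1 q.1]
            rw [show star (T (Matrix.single p.2 q.2 1) p.1 q.1)
                = (starRingEnd ℂ) (T (Matrix.single p.2 q.2 1) p.1 q.1) from rfl]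
            rw [show ∀ z w : ℂ, (w * z) * (w * (starRingEnd ℂ) z)
                = (w * w) * (z * (starRingEnd ℂ) z) from fun z w => by ring]
            rw [Complex.mul_conj']
            norm_cast
        _ = (((Fintype.card a : ℝ)⁻¹ * (Fintype.card a : ℝ)⁻¹ * C : ℝ) : ℂ) := by
            simp only [← Finset.mul_sum]
            have hsum : ∑ p : b × a, ∑ q : b × a,
                ((‖T (Matrix.single p.2 q.2 1) p.1 q.1‖ ^ 2 : ℝ) : ℂ) = ((C : ℝ) : ℂ) := by
              rw [show ∑ p : b × a, ∑ q : b × a,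
                  ((‖T (Matrix.single p.2 q.2 1) p.1 q.1‖ ^ 2 : ℝ) : ℂ)
                  = ((∑ p : b × a, ∑ q : b × a,
                    ‖T (Matrix.single p.2 q.2 1) p.1 q.1‖ ^ 2 : ℝ) : ℂ) by push_cast; rfl]
              congr 1
              simp only [hCdef, hg]
              calc ∑ p : b × a, ∑ q : b × a, ‖T (Matrix.single p.2 q.2 1) p.1 q.1‖ ^ 2
                  = ∑ x : b, ∑ i : a, ∑ y : b, ∑ j : a,
                      ‖T (Matrix.single i j 1) x y‖ ^ 2 := by
                    rw [Fintype.sum_prod_type]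
                    refine Finset.sum_congr rfl fun x _ => Finset.sum_congr rfl fun i _ => ?_
                    rw [Fintype.sum_prod_type]
                _ = ∑ i : a, ∑ x : b, ∑ y : b, ∑ j : a,
                      ‖T (Matrix.single i j 1) x y‖ ^ 2 := Finset.sum_comm
                _ = ∑ i : a, ∑ x : b, ∑ j : a, ∑ y : b,
                      ‖T (Matrix.single i j 1) x y‖ ^ 2 := by
                    refine Finset.sum_congr rfl fun i _ => Finset.sum_congr rfl fun x _ => ?_
                    exact Finset.sum_comm
                _ = ∑ i : a, ∑ j : a, ∑ x : b, ∑ y : b,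
                      ‖T (Matrix.single i j 1) x y‖ ^ 2 := by
                    refine Finset.sum_congr rfl fun i _ => ?_
                    exact Finset.sum_comm
                _ = ∑ m : a, ∑ n : a, ∑ x : b × b,
                      ‖T (Matrix.single m n 1) x.1 x.2‖ ^ 2 := by
                    refine Finset.sum_congr rfl fun m _ => Finset.sum_congr rfl fun n _ => ?_
                    rw [Fintype.sum_prod_type]
            rw [hsum]
            push_cast
            ring
    rw [h0, Complex.ofReal_re]
  have hfinal : (Fintype.card a : ℝ) ^ 2 * ((choi (⇑T) * choi (⇑T)).trace).re = C := by
    rw [htr]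
    rcases eq_or_ne (Fintype.card a) 0 with hd | hd
    · have hae : IsEmpty a := Fintype.card_eq_zero_iff.mp hd
      have hC0 : C = 0 := by rw [hCdef]; simp
      rw [hC0, hd]
      simp
    · have hdr : (Fintype.card a : ℝ) ≠ 0 := Nat.cast_ne_zero.mpr hd
      field_simp
  rw [hfinal]
  exact opNorm_le_of_bilinear _ C hCnn hbil


end Decoupling
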